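/- Let m ≥ 1 and let ∞ > s₁ ≥ s₂ ≥ ⋯ ≥ s_m ≥ 0 be real numbers. Then ∏_{k=1}^{m} e^{−s_k²/2} · ∏_{1≤j<k≤m} (s_j² − s_k²) · [ ∫_{s₁}^{∞} dt₁ ∫_{s₂}^{s₁} dt₂ ⋯ ∫_{s_m}^{s_{m−1}} dt_m ∏_{k=1}^{m} t_k e^{−t_k²/2} · ∏_{1≤j<k≤m} (t_j² − t_k²) ] = ∏_{k=1}^{m} e^{−s_k²} · ∏_{1≤j<k≤m} (s_j² − s_k²)². -/

import Mathlib

open MeasureTheory Polynomial Filter Set Topology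

noncomputable def gqp : ℕ → Polynomial ℝ
  | 0 => 1
  | (n+1) => Polynomial.X ^ (n+1) + Polynomial.C (2*(n+1 : ℝ)) * gqp n

lemma gqp_monic : ∀ n, (gqp n).Monic ∧ (gqp n).natDegree = n
  | 0 => ⟨monic_one, natDegree_one⟩
  | (n+1) => by
    obtain ⟨hm, hd⟩ := gqp_monic n
    have hdeg : degree (Polynomial.C (2*(n+1 : ℝ)) * gqp n) < degree (Polynomial.X ^ (n+1) : ℝ[X]) := by
      apply degree_lt_degree
      rw [natDegree_X_pow]
      exact lt_of_le_of_lt ((natDegree_C_mul_le _ _).trans hd.le) (Nat.lt_succ_self n)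
    constructor
    · exact (monic_X_pow _).add_of_left hdeg
    · rw [gqp, natDegree_add_eq_left_of_degree_lt hdeg, natDegree_X_pow]

lemma gqp_key : ∀ n, gqp n - Polynomial.C 2 * derivative (gqp n) = Polynomial.X ^ n
  | 0 => by simp [gqp]
  | (n+1) => by
    have ih := gqp_key n
    rw [gqp, derivative_add, derivative_C_mul, derivative_X_pow]
    push_cast
    simp only [Polynomial.C_mul, Polynomial.C_add, Polynomial.C_1]
    linear_combination (Polynomial.C 2 * (Polynomial.C (n:ℝ) + 1)) * ih

/-- the one-variable integrand -/
noncomputable def gphi (j : ℕ) (u : ℝ) : ℝ := u ^ (2*j+1) * Real.exp (-u^2/2)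

/-- the (negative of the) antiderivative -/
noncomputable def gP (j : ℕ) (x : ℝ) : ℝ := (gqp j).eval (x^2) * Real.exp (-x^2/2)

lemma gphi_cont (j : ℕ) : Continuous (gphi j) := by
  unfold gphi; fun_prop

lemma gP_hasDerivAt (j : ℕ) (x : ℝ) :
    HasDerivAt (fun y => -(gP j y)) (gphi j x) x := by
  have h1 : HasDerivAt (fun y : ℝ => (gqp j).eval (y^2))
      ((derivative (gqp j)).eval (x^2) * (2*x)) x := by
    have := ((gqp j).hasDerivAt (x^2)).comp x ((hasDerivAt_pow 2 x))
    simpa [mul_comm, pow_one, Function.comp_def] using this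
  have h2 : HasDerivAt (fun y : ℝ => Real.exp (-y^2/2))
      (Real.exp (-x^2/2) * (-x)) x := by
    have hx : HasDerivAt (fun y : ℝ => -y^2/2) (-x) x := by
      have := (hasDerivAt_pow 2 x).neg.div_const 2
      refine this.congr_deriv (Eq.symm ?_)
      push_cast
      ring
    simpa [Function.comp_def] using (Real.hasDerivAt_exp (-x^2/2)).comp x hx
  have h3 := (h1.mul h2).neg
  refine h3.congr_deriv (Eq.symm ?_)
  have key : (gqp j).eval (x^2) - 2 * (derivative (gqp j)).eval (x^2) = (x^2)^j := by
    have := congrArg (Polynomial.eval (x^2)) (gqp_key j)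
    simpa using this
  have hpow : x ^ (2*j+1) = (x^2)^j * x := by
    rw [pow_succ, pow_mul]
  unfold gphi
  rw [hpow]
  linear_combination (-(x * Real.exp (-x^2/2))) * key

lemma gP_tendsto (j : ℕ) : Tendsto (fun x => -(gP j x)) atTop (𝓝 0) := by
  rw [show (0:ℝ) = -0 by norm_num]
  apply Tendsto.neg
  unfold gP
  have h1 : Tendsto (fun u : ℝ => ((gqp j).comp (Polynomial.C 2 * Polynomial.X)).eval u / Real.exp u)
      atTop (𝓝 0) := Polynomial.tendsto_div_exp_atTop _
  have h2 : Tendsto (fun x : ℝ => x^2/2) atTop atTop := by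
    apply Filter.Tendsto.atTop_div_const (by norm_num)
    exact tendsto_pow_atTop (by norm_num)
  have := h1.comp h2
  convert this using 2 with x
  simp only [Function.comp, Polynomial.eval_comp, Polynomial.eval_mul, Polynomial.eval_C,
    Polynomial.eval_X]
  have he : Real.exp (-x^2/2) = (Real.exp (x^2/2))⁻¹ := by
    rw [← Real.exp_neg]; ring_nf
  rw [he, show (2:ℝ) * (x^2/2) = x^2 by ring]
  exact (div_eq_mul_inv _ _).symm

lemma gphi_integrableOn_Ioi (j : ℕ) {a : ℝ} (ha : 0 ≤ a) :
    IntegrableOn (gphi j) (Ioi a) := by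
  have h0 : IntegrableOn (fun x : ℝ => x ^ ((2*j+1 : ℕ) : ℝ) * Real.exp (-(1/2) * x ^ 2))
      (Ioi 0) := by
    apply integrableOn_rpow_mul_exp_neg_mul_sq (by norm_num : (0:ℝ) < 1/2)
    have : (0:ℝ) ≤ ((2*j : ℕ) : ℝ) := by positivity
    push_cast
    linarith
  have h1 : IntegrableOn (gphi j) (Ioi 0) := by
    apply h0.congr_fun ?_ measurableSet_Ioi
    intro x hx
    show x ^ ((2*j+1 : ℕ) : ℝ) * Real.exp (-(1/2) * x ^ 2) = _
    unfold gphi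
    rw [Real.rpow_natCast]
    ring_nf
  exact h1.mono_set (Ioi_subset_Ioi ha)

lemma gphi_integrableOn_Ioo (j : ℕ) (a b : ℝ) : IntegrableOn (gphi j) (Ioo a b) :=
  ((gphi_cont j).integrableOn_Icc).mono_set Ioo_subset_Icc_self

lemma gphi_integral_Ioi (j : ℕ) {a : ℝ} (ha : 0 ≤ a) :
    ∫ x in Ioi a, gphi j x = gP j a := by
  rw [integral_Ioi_of_hasDerivAt_of_tendsto' (fun x _ => gP_hasDerivAt j x)
    (gphi_integrableOn_Ioi j ha) (gP_tendsto j)]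
  ring

lemma gphi_integral_Ioo (j : ℕ) {a b : ℝ} (hab : a ≤ b) :
    ∫ x in Ioo a b, gphi j x = gP j a - gP j b := by
  rw [← integral_Ioc_eq_integral_Ioo, ← intervalIntegral.integral_of_le hab,
    intervalIntegral.integral_eq_sub_of_hasDerivAt (fun x _ => gP_hasDerivAt j x)
      ((gphi_cont j).intervalIntegrable a b)]
  ring

lemma indicator_pi_prod {m : ℕ} (I : Fin m → Set ℝ) (f : Fin m → ℝ → ℝ) :
    (Set.univ.pi I).indicator (fun t => ∏ i, f i (t i))
      = fun t => ∏ i, (I i).indicator (f i) (t i) := by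
  funext t
  by_cases h : t ∈ Set.univ.pi I
  · rw [Set.indicator_of_mem h]
    exact Finset.prod_congr rfl fun i _ => (Set.indicator_of_mem (h i (Set.mem_univ i)) _).symm
  · rw [Set.indicator_of_notMem h]
    rw [Set.mem_pi] at h
    push_neg at h
    obtain ⟨i, -, hi⟩ := h
    exact (Finset.prod_eq_zero (Finset.mem_univ i) (Set.indicator_of_notMem hi _)).symm

lemma integral_pi_box {m : ℕ} (I : Fin m → Set ℝ) (hI : ∀ i, MeasurableSet (I i))
    (f : Fin m → ℝ → ℝ) :
    ∫ t : Fin m → ℝ in Set.univ.pi I, ∏ i, f i (t i) = ∏ i, ∫ x in I i, f i x := by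
  rw [← integral_indicator (MeasurableSet.univ_pi hI), indicator_pi_prod,
    MeasureTheory.integral_fintype_prod_volume_eq_prod (f := fun i x => (I i).indicator (f i) x)]
  exact Finset.prod_congr rfl fun i _ => integral_indicator (hI i)

lemma integrableOn_pi_box {m : ℕ} (I : Fin m → Set ℝ) (hI : ∀ i, MeasurableSet (I i))
    (f : Fin m → ℝ → ℝ) (hf : ∀ i, IntegrableOn (f i) (I i)) :
    IntegrableOn (fun t : Fin m → ℝ => ∏ i, f i (t i)) (Set.univ.pi I) := by
  have h2 := Integrable.fintype_prod (f := fun i x => (I i).indicator (f i) x)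
    (fun i => (integrable_indicator_iff (hI i)).mpr (hf i))
  rw [← indicator_pi_prod I f] at h2
  exact (integrable_indicator_iff (MeasurableSet.univ_pi hI)).mp h2

lemma prod_Iio_neg {m : ℕ} (v : Fin m → ℝ) :
    (∏ k : Fin m, ∏ j ∈ Finset.Iio k, (v j - v k))
      = (∏ k : Fin m, ∏ j ∈ Finset.Iio k, (-1 : ℝ)) *
        ∏ k : Fin m, ∏ j ∈ Finset.Iio k, (v k - v j) := by
  rw [← Finset.prod_mul_distrib]
  refine Finset.prod_congr rfl fun k _ => ?_
  rw [← Finset.prod_mul_distrib]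
  exact Finset.prod_congr rfl fun j _ => by ring

lemma det_vandermonde_Iio {m : ℕ} (v : Fin m → ℝ) :
    (Matrix.vandermonde v).det = ∏ k : Fin m, ∏ j ∈ Finset.Iio k, (v k - v j) := by
  rw [Matrix.det_vandermonde]
  exact Finset.prod_comm' (fun x y => by
    simp only [Finset.mem_univ, Finset.mem_Ioi, Finset.mem_Iio, true_and, and_true])

lemma prod_Iio_fin {m : ℕ} (k : Fin m) (f : ℕ → ℝ) :
    ∏ j ∈ Finset.Iio k, f (j : ℕ) = ∏ j ∈ Finset.range (k : ℕ), f j := by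
  rw [show Finset.range (k : ℕ) = (Finset.Iio k).map Fin.valEmbedding by
    rw [Fin.map_valEmbedding_Iio, Nat.Iio_eq_range]]
  rw [Finset.prod_map]
  rfl

lemma prod_prod_fin_eq_range {m : ℕ} (f : ℕ → ℕ → ℝ) :
    (∏ k : Fin m, ∏ j ∈ Finset.Iio k, f (j : ℕ) (k : ℕ))
      = ∏ k ∈ Finset.range m, ∏ j ∈ Finset.range k, f j k := by
  rw [← Fin.prod_univ_eq_prod_range (fun k => ∏ j ∈ Finset.range k, f j k) m]
  exact Finset.prod_congr rfl fun k _ => prod_Iio_fin k (fun j => f j (k : ℕ))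

lemma prod_Icc_one_eq_range {M : Type*} [CommMonoid M] (m : ℕ) (f : ℕ → M) :
    ∏ k ∈ Finset.Icc 1 m, f k = ∏ k ∈ Finset.range m, f (k + 1) := by
  rw [← Finset.Ico_add_one_right_eq_Icc, Finset.prod_Ico_eq_prod_range]
  simp [add_comm]

lemma prod_pairs_Icc_eq {m : ℕ} (F : ℕ → ℕ → ℝ) :
    (∏ k ∈ Finset.Icc 1 m, ∏ j ∈ Finset.Ico 1 k, F j k)
      = ∏ k ∈ Finset.range m, ∏ j ∈ Finset.range k, F (j+1) (k+1) := by
  rw [prod_Icc_one_eq_range m (fun k => ∏ j ∈ Finset.Ico 1 k, F j k)]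
  refine Finset.prod_congr rfl fun k _ => ?_
  rw [Finset.prod_Ico_eq_prod_range]
  simp [add_comm]

lemma tele_sum (g : ℕ → ℝ) (M : ℕ) :
    ∑ n ∈ Finset.range (M+1), (g (n+1) - if n = 0 then 0 else g n) = g (M+1) := by
  induction M with
  | zero => simp
  | succ M ih =>
    rw [Finset.sum_range_succ, ih, if_neg (Nat.succ_ne_zero M)]
    ring

lemma filter_le_range {N m : ℕ} (h : N < m) :
    (Finset.range m).filter (fun n => n ≤ N) = Finset.range (N+1) := by
  ext n
  simp only [Finset.mem_filter, Finset.mem_range]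
  omega

lemma det_L {m : ℕ} :
    (Matrix.of fun i i' : Fin m => if i' ≤ i then (1:ℝ) else 0).det = 1 := by
  rw [Matrix.det_of_lowerTriangular _ (fun i j hij => by
    simp only [Matrix.of_apply]
    exact if_neg (not_le.mpr hij))]
  simp

/-- Gauss case of Theorem 1.1, even order `n = 2m`, at the level of densities:
multiplying the even-indexed factor by the integral of the odd-indexed factor over the
interlacing region gives the chiral-unitary density `∏ e^{-s_k²} Δ(s²)²`. -/
theorem gauss_even_decimation_density (m : ℕ) (hm : 1 ≤ m) (s : ℕ → ℝ)
    (hdec : ∀ i, 1 ≤ i → i < m → s (i + 1) ≤ s i) (hsm : 0 ≤ s m) :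
    (∏ k ∈ Finset.Icc 1 m, Real.exp (-(s k) ^ 2 / 2)) *
      (∏ k ∈ Finset.Icc 1 m, ∏ j ∈ Finset.Ico 1 k, ((s j) ^ 2 - (s k) ^ 2)) *
      (∫ t in {t : Fin m → ℝ | ∀ i : Fin m,
          s ((i : ℕ) + 1) < t i ∧ (0 < (i : ℕ) → t i < s (i : ℕ))},
        (∏ k : Fin m, t k * Real.exp (-(t k) ^ 2 / 2)) *
          ∏ k : Fin m, ∏ j ∈ Finset.Iio k, ((t j) ^ 2 - (t k) ^ 2)) =
    (∏ k ∈ Finset.Icc 1 m, Real.exp (-(s k) ^ 2)) *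
      ∏ k ∈ Finset.Icc 1 m, ∏ j ∈ Finset.Ico 1 k, ((s j) ^ 2 - (s k) ^ 2) ^ 2 := by
  classical
  -- monotonicity and nonnegativity
  have hmono : ∀ j k, 1 ≤ j → j ≤ k → k ≤ m → s k ≤ s j := by
    intro j k h1 hjk hkm
    induction k with
    | zero => omega
    | succ k ih =>
      rcases Nat.eq_or_lt_of_le hjk with h | h
      · exact le_of_eq (by rw [h])
      · exact le_trans (hdec k (by omega) (by omega)) (ih (by omega) (by omega))
  have hpos : ∀ k, 1 ≤ k → k ≤ m → 0 ≤ s k :=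
    fun k h1 h2 => le_trans hsm (hmono k m h1 h2 le_rfl)
  set u : Fin m → ℝ := fun i => s ((i : ℕ) + 1) with hu
  set I : Fin m → Set ℝ :=
    fun i => if (i : ℕ) = 0 then Ioi (s 1) else Ioo (s ((i : ℕ) + 1)) (s (i : ℕ)) with hIdef
  have hI : ∀ i, MeasurableSet (I i) := by
    intro i
    by_cases h0 : (i : ℕ) = 0 <;> simp [hIdef, h0, measurableSet_Ioi, measurableSet_Ioo]
  have hS : {t : Fin m → ℝ | ∀ i : Fin m,
      s ((i : ℕ) + 1) < t i ∧ (0 < (i : ℕ) → t i < s (i : ℕ))} = Set.univ.pi I := by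
    ext t
    simp only [Set.mem_setOf_eq, Set.mem_pi, Set.mem_univ, forall_true_left, hIdef]
    refine forall_congr' fun i => ?_
    by_cases h0 : (i : ℕ) = 0
    · simp [h0, Set.mem_Ioi]
    · simp [h0, Set.mem_Ioo, Nat.pos_of_ne_zero h0]
  have hφI : ∀ (k : ℕ) (i : Fin m), IntegrableOn (gphi k) (I i) := by
    intro k i
    by_cases h0 : (i : ℕ) = 0
    · rw [hIdef]; simp only [h0, if_pos]
      exact gphi_integrableOn_Ioi k (hpos 1 le_rfl hm)
    · rw [hIdef]; simp only [h0, if_neg, ite_false]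
      exact gphi_integrableOn_Ioo k _ _
  set NA : Matrix (Fin m) (Fin m) ℝ :=
    Matrix.of (fun i j : Fin m => ∫ x in I i, gphi (j : ℕ) x) with hNAdef
  set ε : ℝ := ∏ k : Fin m, ∏ j ∈ Finset.Iio k, (-1 : ℝ) with hεdef
  -- pointwise rewriting of the integrand
  have hgt : ∀ t : Fin m → ℝ,
      (∏ k : Fin m, t k * Real.exp (-(t k) ^ 2 / 2)) *
        (∏ k : Fin m, ∏ j ∈ Finset.Iio k, ((t j) ^ 2 - (t k) ^ 2))
      = ε * ∑ σ : Equiv.Perm (Fin m), ((Equiv.Perm.sign σ : ℤ) : ℝ) *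
          ∏ j : Fin m, gphi ((σ⁻¹ j : Fin m) : ℕ) (t j) := by
    intro t
    rw [prod_Iio_neg (fun i => (t i) ^ 2), ← det_vandermonde_Iio, ← hεdef,
      Matrix.det_apply']
    rw [show ∀ a b c : ℝ, a * (b * c) = b * (a * c) from fun a b c => by ring]
    congr 1
    rw [Finset.mul_sum]
    refine Finset.sum_congr rfl fun σ _ => ?_
    rw [← mul_assoc, mul_comm _ ((Equiv.Perm.sign σ : ℤ) : ℝ), mul_assoc]
    congr 1
    rw [← Equiv.prod_comp σ (fun j => gphi ((σ⁻¹ j : Fin m) : ℕ) (t j))]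
    simp only [Equiv.Perm.coe_inv, Equiv.symm_apply_apply]
    rw [← Equiv.prod_comp σ (fun k => t k * Real.exp (-(t k) ^ 2 / 2)),
      ← Finset.prod_mul_distrib]
    refine Finset.prod_congr rfl fun i _ => ?_
    simp only [Matrix.vandermonde_apply]
    unfold gphi
    conv_rhs => rw [pow_succ (t (σ i)) (2 * (i : ℕ)), pow_mul (t (σ i)) 2 (i : ℕ)]
    ring
  -- computing the integral
  have hint : (∫ t in Set.univ.pi I,
      (∏ k : Fin m, t k * Real.exp (-(t k) ^ 2 / 2)) *
        ∏ k : Fin m, ∏ j ∈ Finset.Iio k, ((t j) ^ 2 - (t k) ^ 2))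
      = ε * NA.det := by
    rw [show (fun t : Fin m → ℝ =>
        (∏ k : Fin m, t k * Real.exp (-(t k) ^ 2 / 2)) *
          ∏ k : Fin m, ∏ j ∈ Finset.Iio k, ((t j) ^ 2 - (t k) ^ 2))
      = fun t => ε * ∑ σ : Equiv.Perm (Fin m), ((Equiv.Perm.sign σ : ℤ) : ℝ) *
          ∏ j : Fin m, gphi ((σ⁻¹ j : Fin m) : ℕ) (t j) from funext hgt]
    rw [integral_const_mul]
    congr 1
    rw [integral_finset_sum _ (fun σ _ => by
      exact ((integrableOn_pi_box I hI (fun j => gphi ((σ⁻¹ j : Fin m) : ℕ))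
        (fun j => hφI _ j)).const_mul _))]
    have hterm : ∀ σ : Equiv.Perm (Fin m),
        (∫ t in Set.univ.pi I, ((Equiv.Perm.sign σ : ℤ) : ℝ) *
          ∏ j : Fin m, gphi ((σ⁻¹ j : Fin m) : ℕ) (t j))
        = ((Equiv.Perm.sign σ : ℤ) : ℝ) * ∏ j : Fin m, NA.transpose (σ⁻¹ j) j := by
      intro σ
      rw [integral_const_mul, integral_pi_box I hI (fun j => gphi ((σ⁻¹ j : Fin m) : ℕ))]
      rfl
    rw [Finset.sum_congr rfl fun σ _ => hterm σ]
    rw [← Matrix.det_transpose NA, Matrix.det_apply']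
    refine Fintype.sum_bijective (fun σ : Equiv.Perm (Fin m) => σ⁻¹)
      (Function.Involutive.bijective (fun σ => inv_inv σ)) _ _ (fun σ => ?_)
    rw [Equiv.Perm.sign_inv]
  -- evaluating the entries
  have hNA : ∀ i j : Fin m, NA i j
      = gP (j : ℕ) (s ((i : ℕ) + 1)) - (if (i : ℕ) = 0 then 0 else gP (j : ℕ) (s (i : ℕ))) := by
    intro i j
    by_cases h0 : (i : ℕ) = 0
    · rw [hNAdef]
      simp only [Matrix.of_apply, hIdef, h0, if_pos, ite_true, if_true]
      rw [gphi_integral_Ioi _ (hpos 1 le_rfl hm)]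
      norm_num
    · rw [hNAdef]
      simp only [Matrix.of_apply, hIdef, h0, ite_false, if_neg]
      rw [gphi_integral_Ioo _ (hdec (i : ℕ) (Nat.one_le_iff_ne_zero.mpr h0) i.isLt)]
  -- telescoping via a lower-triangular matrix
  have hLA : (Matrix.of (fun i i' : Fin m => if i' ≤ i then (1:ℝ) else 0)) * NA
      = Matrix.of (fun i j : Fin m => gP (j : ℕ) (s ((i : ℕ) + 1))) := by
    ext i j
    rw [Matrix.mul_apply]
    simp only [Matrix.of_apply, hNA, Fin.le_def]
    rw [Fin.sum_univ_eq_sum_range (fun n => (if n ≤ (i : ℕ) then (1:ℝ) else 0) *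
      (gP (j : ℕ) (s (n + 1)) - if n = 0 then 0 else gP (j : ℕ) (s n))) m]
    simp only [ite_mul, one_mul, zero_mul]
    rw [← Finset.sum_filter, filter_le_range i.isLt]
    exact tele_sum (fun n => gP (j : ℕ) (s n)) (i : ℕ)
  have h5 : NA.det = (Matrix.of (fun i j : Fin m => gP (j : ℕ) (s ((i : ℕ) + 1)))).det := by
    rw [← hLA, Matrix.det_mul, det_L, one_mul]
  have h6 : (Matrix.of (fun i j : Fin m => gP (j : ℕ) (s ((i : ℕ) + 1)))).det
      = (∏ i : Fin m, Real.exp (-(u i) ^ 2 / 2)) *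
        (Matrix.vandermonde (fun i => (u i) ^ 2)).det := by
    rw [show (Matrix.of (fun i j : Fin m => gP (j : ℕ) (s ((i : ℕ) + 1))))
        = Matrix.of (fun i j : Fin m => Real.exp (-(u i) ^ 2 / 2) *
            ((gqp (j : ℕ)).eval ((u i) ^ 2))) by
      ext i j
      simp only [Matrix.of_apply]
      unfold gP
      rw [hu]
      ring]
    rw [Matrix.det_mul_column (A := fun i j : Fin m => (gqp (j : ℕ)).eval ((u i) ^ 2))]
    congr 1
    exact (Matrix.det_eval_matrixOfPolynomials_eq_det_vandermonde (fun i => (u i) ^ 2)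
      (fun j => gqp (j : ℕ)) (fun j => (gqp_monic (j : ℕ)).2) (fun j => (gqp_monic (j : ℕ)).1)).symm
  -- statement-side rewrites
  have hE2 : ∏ k ∈ Finset.Icc 1 m, Real.exp (-(s k) ^ 2 / 2)
      = ∏ i : Fin m, Real.exp (-(u i) ^ 2 / 2) := by
    rw [prod_Icc_one_eq_range m (fun k => Real.exp (-(s k) ^ 2 / 2)),
      ← Fin.prod_univ_eq_prod_range (fun k => Real.exp (-(s (k + 1)) ^ 2 / 2)) m]
  have hVan : ∏ k ∈ Finset.Icc 1 m, ∏ j ∈ Finset.Ico 1 k, ((s j) ^ 2 - (s k) ^ 2)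
      = ε * (Matrix.vandermonde (fun i => (u i) ^ 2)).det := by
    rw [prod_pairs_Icc_eq (fun j k => (s j) ^ 2 - (s k) ^ 2),
      ← prod_prod_fin_eq_range (fun j k => (s (j + 1)) ^ 2 - (s (k + 1)) ^ 2)]
    rw [show (∏ k : Fin m, ∏ j ∈ Finset.Iio k, ((s ((j : ℕ) + 1)) ^ 2 - (s ((k : ℕ) + 1)) ^ 2))
        = ∏ k : Fin m, ∏ j ∈ Finset.Iio k, ((u j) ^ 2 - (u k) ^ 2) from rfl]
    rw [prod_Iio_neg (fun i => (u i) ^ 2), ← det_vandermonde_Iio, hεdef]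
  have hExp : ∏ k ∈ Finset.Icc 1 m, Real.exp (-(s k) ^ 2)
      = (∏ i : Fin m, Real.exp (-(u i) ^ 2 / 2)) * ∏ i : Fin m, Real.exp (-(u i) ^ 2 / 2) := by
    rw [← hE2, ← Finset.prod_mul_distrib]
    refine Finset.prod_congr rfl fun k _ => ?_
    rw [← Real.exp_add]
    norm_num
  have hSq : ∏ k ∈ Finset.Icc 1 m, ∏ j ∈ Finset.Ico 1 k, ((s j) ^ 2 - (s k) ^ 2) ^ 2
      = (∏ k ∈ Finset.Icc 1 m, ∏ j ∈ Finset.Ico 1 k, ((s j) ^ 2 - (s k) ^ 2)) ^ 2 := by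
    rw [← Finset.prod_pow]
    exact Finset.prod_congr rfl fun k _ => Finset.prod_pow _ _ _
  rw [hS, hint, h5, h6, hE2, hVan, hExp, hSq, hVan]
  ring
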